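/- arXiv:1607.03824 — 3 statements merged into one kernel-verified Lean document; each statement's English description precedes it below -/
import Mathlib

section
/- Let z_1, ..., z_u be finitely many distinct complex numbers of absolute value 1. Then there exists a real constant R with 0 < R < 1/2 and infinitely many positive integers n such that for every t = 1, ..., u and every k = 1, ..., n, either z_t = e^{2πik/n} or |z_t − e^{2πik/n}| ≥ 2 sin(Rπ/n). -/
open Complex
/-- chord length -/
lemma chord_abs (a b : ℝ) :
    ‖Complex.exp (a * Complex.I) - Complex.exp (b * Complex.I)‖
      = 2 * |Real.sin ((a - b) / 2)| := by
  have h1 : Complex.exp ((a:ℂ) * Complex.I) - Complex.exp ((b:ℂ) * Complex.I)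
      = Complex.ofReal (Real.cos a - Real.cos b)
        + Complex.ofReal (Real.sin a - Real.sin b) * Complex.I := by
    rw [Complex.exp_mul_I, Complex.exp_mul_I]
    push_cast
    ring
  rw [h1, Complex.norm_add_mul_I]
  rw [show (2:ℝ) * |Real.sin ((a-b)/2)| = Real.sqrt ((2 * Real.sin ((a-b)/2))^2) by
    rw [Real.sqrt_sq_eq_abs, abs_mul]; norm_num]
  congr 1
  have h2 := Real.cos_sq ((a - b)/2)
  have h4 := Real.cos_sub a b
  have h5 := Real.sin_sq_add_cos_sq a
  have h6 := Real.sin_sq_add_cos_sq b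
  have h7 : 2 * ((a - b)/2) = a - b := by ring
  rw [h7] at h2
  nlinarith [Real.sin_sq_add_cos_sq ((a-b)/2)]

/-- lower bound on |sin| away from integers -/
lemma sin_lower (δ r : ℝ) (hr : 0 < r) (hr2 : r ≤ 1/2)
    (h : ∀ w : ℤ, r ≤ |δ - w|) :
    Real.sin (r * Real.pi) ≤ |Real.sin (δ * Real.pi)| := by
  have hpi := Real.pi_pos
  set b := round δ with hb
  set y := δ - b with hy
  have hy2 : |y| ≤ 1/2 := abs_sub_round δ
  have hyr : r ≤ |y| := h b
  have hsin : |Real.sin (δ * Real.pi)| = |Real.sin (y * Real.pi)| := by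
    have hδ : δ * Real.pi = y * Real.pi + (b:ℝ) * Real.pi := by rw [hy]; ring
    rw [hδ, Real.sin_add_int_mul_pi, abs_mul]
    have : |((-1:ℝ)) ^ b| = 1 := by
      rcases Int.even_or_odd b with he | ho
      · rw [he.neg_one_zpow]; simp
      · rw [Odd.neg_one_zpow ho]; simp
    rw [this, one_mul]
  have habs : Real.sin (|y| * Real.pi) = |Real.sin (y * Real.pi)| := by
    rcases abs_cases y with ⟨h1, _⟩ | ⟨h1, h2⟩
    · rw [h1, _root_.abs_of_nonneg]
      apply Real.sin_nonneg_of_nonneg_of_le_pi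
      · positivity
      · nlinarith [abs_nonneg y, hy2, h1]
    · rw [h1, _root_.abs_of_nonpos, neg_mul, Real.sin_neg]
      apply Real.sin_nonpos_of_nonpos_of_neg_pi_le
      · nlinarith
      · nlinarith
  rw [hsin, ← habs]
  apply Real.sin_le_sin_of_le_of_le_pi_div_two
  · nlinarith
  · nlinarith
  · nlinarith [abs_nonneg y]

/-- simultaneous recurrence -/
lemma simul_rec (u : ℕ) (θ : Fin u → ℝ) (ε : ℝ) (hε : 0 < ε) (N : ℕ) :
    ∃ m : ℕ, N < m ∧ ∀ t, ∃ w : ℤ, |(m:ℝ) * θ t - w| < ε := by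
  obtain ⟨K, hK⟩ := exists_nat_gt (1/ε)
  have hK0 : 0 < K := by
    have : (0:ℝ) < K := lt_of_le_of_lt (by positivity) hK
    exact_mod_cast this
  set M := N + 1 with hM
  have hbound : ∀ (j : ℕ) (t : Fin u),
      (⌊(K:ℝ) * Int.fract ((j:ℝ) * θ t)⌋).toNat < K := by
    intro j t
    have h0 : (0:ℝ) ≤ Int.fract ((j:ℝ) * θ t) := Int.fract_nonneg _
    have h1 : Int.fract ((j:ℝ) * θ t) < 1 := Int.fract_lt_one _
    have hKR : (0:ℝ) < K := by exact_mod_cast hK0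
    have hlt : (K:ℝ) * Int.fract ((j:ℝ) * θ t) < K := by
      nlinarith
    have hfl : ⌊(K:ℝ) * Int.fract ((j:ℝ) * θ t)⌋ < (K:ℤ) := by
      rw [Int.floor_lt]; exact_mod_cast hlt
    omega
  set f : Fin (K^u + 1) → (Fin u → Fin K) :=
    fun j t => ⟨(⌊(K:ℝ) * Int.fract (((((j:ℕ) * M : ℕ)):ℝ) * θ t)⌋).toNat, by
      have := hbound ((j:ℕ) * M) t
      exact this⟩ with hf
  have hcard : Fintype.card (Fin u → Fin K) < Fintype.card (Fin (K^u + 1)) := by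
    simp [Fintype.card_fun]
  obtain ⟨a, b, hne, heq⟩ := Fintype.exists_ne_map_eq_of_card_lt f hcard
  have key : ∀ (a b : Fin (K^u+1)), (b:ℕ) < (a:ℕ) → f a = f b →
      ∃ m : ℕ, N < m ∧ ∀ t, ∃ w : ℤ, |(m:ℝ) * θ t - w| < ε := by
    intro a b hlt heq
    refine ⟨((a:ℕ) - (b:ℕ)) * M, by
      have h1 : 1 ≤ (a:ℕ) - (b:ℕ) := by omega
      calc N < M := by omega
        _ ≤ ((a:ℕ) - (b:ℕ)) * M := Nat.le_mul_of_pos_left M (by omega)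
      , ?_⟩
    intro t
    set A : ℝ := (((a:ℕ) * M : ℕ) : ℝ) * θ t with hA
    set B : ℝ := (((b:ℕ) * M : ℕ) : ℝ) * θ t with hB
    have hfl : ⌊(K:ℝ) * Int.fract A⌋ = ⌊(K:ℝ) * Int.fract B⌋ := by
      have h1 : (⌊(K:ℝ) * Int.fract A⌋).toNat = (⌊(K:ℝ) * Int.fract B⌋).toNat :=
        congrArg Fin.val (congrFun heq t)
      have h2 : (0:ℤ) ≤ ⌊(K:ℝ) * Int.fract A⌋ :=
        Int.floor_nonneg.mpr (mul_nonneg (by positivity) (Int.fract_nonneg _))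
      have h3 : (0:ℤ) ≤ ⌊(K:ℝ) * Int.fract B⌋ :=
        Int.floor_nonneg.mpr (mul_nonneg (by positivity) (Int.fract_nonneg _))
      omega
    have hKR : (0:ℝ) < K := by exact_mod_cast hK0
    have hfr : |Int.fract A - Int.fract B| < ε := by
      have h1 : (K:ℝ) * Int.fract A < ⌊(K:ℝ) * Int.fract B⌋ + 1 := by
        rw [← hfl]; exact Int.lt_floor_add_one _
      have h2 : (K:ℝ) * Int.fract B < ⌊(K:ℝ) * Int.fract A⌋ + 1 := by
        rw [hfl]; exact Int.lt_floor_add_one _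
      have h3 := Int.floor_le ((K:ℝ) * Int.fract A)
      have h4 := Int.floor_le ((K:ℝ) * Int.fract B)
      rw [abs_sub_lt_iff]
      have h5 : 1 < ε * K := by
        rw [div_lt_iff₀ hε] at hK
        linarith
      constructor <;> nlinarith
    refine ⟨⌊A⌋ - ⌊B⌋, ?_⟩
    have hm : ((((a:ℕ) - (b:ℕ)) * M : ℕ) : ℝ) * θ t = A - B := by
      rw [hA, hB]
      push_cast [Nat.sub_mul, Nat.cast_sub (Nat.mul_le_mul_right M hlt.le)]
      ring
    rw [hm]
    have : A - B - ((⌊A⌋ : ℝ) - ⌊B⌋) = Int.fract A - Int.fract B := by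
      rw [Int.fract, Int.fract]; ring
    push_cast
    rw [show A - B - ((⌊A⌋ : ℝ) - ⌊B⌋) = Int.fract A - Int.fract B from this]
    exact hfr
  rcases Fin.lt_or_lt_of_ne hne with h | h
  · exact key b a h heq.symm
  · exact key a b h heq


lemma dist_int (x : ℝ) (hx : |x| ≤ 1/2) (v : ℤ) : |x| ≤ |x - v| := by
  rcases eq_or_ne v 0 with h | h
  · simp [h]
  · have h1 : (1:ℤ) ≤ |v| := Int.one_le_abs h
    have h1' : (1:ℝ) ≤ |(v:ℝ)| := by exact_mod_cast h1
    have h2 : |(v:ℝ)| - |x| ≤ |(v:ℝ) - x| := abs_sub_abs_le_abs_sub _ _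
    rw [abs_sub_comm] at h2
    linarith


/-- **Lemma (n-gons far away from a given set of points on the circle).**
Given distinct points `z₁, …, z_u` on the unit circle, there is `0 < R < 1/2` and
infinitely many `n` such that each vertex of the regular `n`-gon either coincides
with one of the `z_t` or has distance at least `2 sin (Rπ/n)` from all of them. -/
theorem ngons_far_away_from_points
    (u : ℕ) (z : Fin u → ℂ)
    (habs : ∀ t, ‖z t‖ = 1)
    (hinj : Function.Injective z) :
    ∃ R : ℝ, 0 < R ∧ R < 1 / 2 ∧
      ∀ N : ℕ, ∃ n : ℕ, N < n ∧
        ∀ t : Fin u, ∀ k : ℕ, 1 ≤ k → k ≤ n →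
          z t = Complex.exp (2 * Real.pi * Complex.I * k / n) ∨
          2 * Real.sin (R * Real.pi / n) ≤
            ‖z t - Complex.exp (2 * Real.pi * Complex.I * k / n)‖ := by
  have hpi := Real.pi_pos
  set θ : Fin u → ℝ := fun t => Complex.arg (z t) / (2*Real.pi) with hθ
  have hz : ∀ t, z t = Complex.exp ((Complex.arg (z t) : ℂ) * Complex.I) := by
    intro t
    conv_lhs => rw [← Complex.norm_mul_exp_arg_mul_I (z t)]
    rw [habs t, Complex.ofReal_one, one_mul]
  have hθhalf : ∀ t, |θ t| ≤ 1/2 := by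
    intro t
    have h1 := Complex.abs_arg_le_pi (z t)
    rw [hθ]
    simp only []
    rw [abs_div, abs_of_pos (show (0:ℝ) < 2*Real.pi by positivity),
      div_le_iff₀ (show (0:ℝ) < 2*Real.pi by positivity)]
    linarith
  have harg : ∀ t, Complex.arg (z t) = θ t * (2*Real.pi) := by
    intro t; rw [hθ]; field_simp
  have hθ0 : ∀ t, z t = 1 → θ t = 0 := by
    intro t ht
    rw [hθ]; simp only [ht, Complex.arg_one, zero_div]
  set F : Finset ℝ := insert (4⁻¹ : ℝ)
    ((Finset.univ.filter fun t => z t ≠ 1).image fun t => |θ t| / 2) with hF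
  have hFne : F.Nonempty := ⟨4⁻¹, Finset.mem_insert_self _ _⟩
  set R := F.min' hFne with hR
  have hRq : R ≤ 4⁻¹ := Finset.min'_le _ _ (Finset.mem_insert_self _ _)
  have hRle : ∀ t, z t ≠ 1 → R ≤ |θ t| / 2 := by
    intro t ht
    exact Finset.min'_le _ _ (Finset.mem_insert_of_mem (Finset.mem_image.mpr
      ⟨t, Finset.mem_filter.mpr ⟨Finset.mem_univ t, ht⟩, rfl⟩))
  have hRpos : 0 < R := by
    rcases Finset.mem_insert.mp (F.min'_mem hFne) with h | h
    · rw [hR, h]; norm_num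
    · obtain ⟨t, ht, hRt⟩ := Finset.mem_image.mp h
      have htne : z t ≠ 1 := (Finset.mem_filter.mp ht).2
      have hθne : θ t ≠ 0 := by
        intro h0
        apply htne
        rw [hz t, harg t, h0]
        simp
      rw [hR, ← hRt]
      have := abs_pos.mpr hθne
      positivity
  refine ⟨R, hRpos, by linarith, ?_⟩
  intro N
  obtain ⟨m, hm, hrec⟩ := simul_rec u θ R hRpos N
  refine ⟨m+1, by omega, ?_⟩
  have hn0 : 0 < m+1 := Nat.succ_pos m
  have hnR : (0:ℝ) < ((m+1:ℕ):ℝ) := by positivity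
  intro t k hk1 hkn
  by_cases h1 : z t = 1 ∧ k = m+1
  · left
    rw [h1.1, h1.2]
    have hc : ((m+1:ℕ):ℂ) ≠ 0 := by
      exact_mod_cast (Nat.cast_ne_zero (R := ℂ)).mpr hn0.ne'
    rw [mul_div_assoc, div_self hc, mul_one, Complex.exp_two_pi_mul_I]
  · right
    -- the key integer-distance bound
    have haux : ∀ w : ℤ, R ≤ |((m+1:ℕ):ℝ) * θ t - (k:ℝ) - ((m+1:ℕ):ℝ)*w| := by
      by_cases hz1 : z t = 1
      · intro w
        have hkn' : k ≠ m+1 := fun hkk => h1 ⟨hz1, hkk⟩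
        have hq : ((k:ℤ) + ((m+1:ℕ):ℤ)*w) ≠ 0 := by
          rcases le_or_gt 0 w with hw | hw
          · have : (1:ℤ) ≤ (k:ℤ) + ((m+1:ℕ):ℤ)*w := by
              have : 0 ≤ ((m+1:ℕ):ℤ)*w := by positivity
              omega
            omega
          · have hw1 : w ≤ -1 := by omega
            have : ((m+1:ℕ):ℤ)*w ≤ ((m+1:ℕ):ℤ)*(-1) :=
              mul_le_mul_of_nonneg_left hw1 (by positivity)
            have hkk : (k:ℤ) < ((m+1:ℕ):ℤ) := by
              have : k < m+1 := lt_of_le_of_ne hkn hkn'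
              exact_mod_cast this
            omega
        have h2 : (1:ℤ) ≤ |(k:ℤ) + ((m+1:ℕ):ℤ)*w| := Int.one_le_abs hq
        have h2' : (1:ℝ) ≤ |((k:ℤ):ℝ) + (((m+1:ℕ):ℤ):ℝ)*w| := by
          rw [show ((k:ℤ):ℝ) + (((m+1:ℕ):ℤ):ℝ)*(w:ℝ) = (((k:ℤ) + ((m+1:ℕ):ℤ)*w : ℤ):ℝ) by push_cast; ring]
          rw [← Int.cast_abs]
          exact_mod_cast h2
        have hθt : θ t = 0 := hθ0 t hz1
        rw [hθt]
        rw [show ((m+1:ℕ):ℝ) * 0 - (k:ℝ) - ((m+1:ℕ):ℝ)*w = -((k:ℝ) + ((m+1:ℕ):ℝ)*w) by ring,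
          abs_neg]
        have : ((k:ℤ):ℝ) + (((m+1:ℕ):ℤ):ℝ)*(w:ℝ) = (k:ℝ) + ((m+1:ℕ):ℝ)*(w:ℝ) := by push_cast; ring
        rw [this] at h2'
        linarith
      · intro w
        obtain ⟨w₀, hw₀⟩ := hrec t
        have h2R : 2*R ≤ |θ t| := by linarith [hRle t hz1]
        set v : ℤ := (k:ℤ) + ((m+1:ℕ):ℤ)*w - w₀ with hv
        have hdist := dist_int (θ t) (hθhalf t) v
        have hsplit : ((m+1:ℕ):ℝ) * θ t - (k:ℝ) - ((m+1:ℕ):ℝ)*w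
            = (θ t - (v:ℝ)) + ((m:ℝ)*θ t - (w₀:ℝ)) := by
          rw [hv]; push_cast; ring
        have key2 := abs_sub_abs_le_abs_sub (θ t - (v:ℝ)) (-(((m:ℝ))*θ t - (w₀:ℝ)))
        rw [abs_neg, sub_neg_eq_add] at key2
        rw [hsplit]
        linarith
    -- convert to fractional-part distance
    set δ : ℝ := θ t - (k:ℝ)/((m+1:ℕ):ℝ) with hδ
    have hfar : ∀ w : ℤ, R/((m+1:ℕ):ℝ) ≤ |δ - w| := by
      intro w
      have h := haux w
      have heq : δ - (w:ℝ) = (((m+1:ℕ):ℝ) * θ t - (k:ℝ) - ((m+1:ℕ):ℝ)*w)/((m+1:ℕ):ℝ) := by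
        rw [hδ]; field_simp
      rw [heq, abs_div, abs_of_pos hnR]
      gcongr
    have hhalf' : R/((m+1:ℕ):ℝ) ≤ 1/2 := by
      rw [div_le_iff₀ hnR]
      have : (1:ℝ) ≤ ((m+1:ℕ):ℝ) := by exact_mod_cast hn0
      nlinarith
    have hsin := sin_lower δ (R/((m+1:ℕ):ℝ)) (by positivity) hhalf' hfar
    have hcne : ((m+1:ℕ):ℂ) ≠ 0 := by
      exact_mod_cast (Nat.cast_ne_zero (R := ℂ)).mpr hn0.ne'
    have hvertex : Complex.exp (2*(Real.pi:ℂ)*Complex.I*(k:ℂ)/((m+1:ℕ):ℂ))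
        = Complex.exp (((2*Real.pi*(k:ℝ)/((m+1:ℕ):ℝ) : ℝ):ℂ) * Complex.I) := by
      congr 1
      push_cast
      field_simp
    have hrn : (0:ℝ) ≠ ((m+1:ℕ):ℝ) := hnR.ne
    rw [hz t, hvertex, chord_abs]
    have hangle : (Complex.arg (z t) - 2*Real.pi*(k:ℝ)/((m+1:ℕ):ℝ))/2 = δ * Real.pi := by
      rw [harg t, hδ]
      field_simp
    rw [hangle]
    have hrw : R*Real.pi/((m+1:ℕ):ℝ) = (R/((m+1:ℕ):ℝ))*Real.pi := by ring
    rw [hrw]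
    linarith
end

section
/- Let Λ be a nonzero polynomial with real coefficients such that Λ(1) ≠ 0 and Λ(−1) ≠ 0, and assume Λ has at least one complex root of absolute value 1. Let μ_max denote the maximal multiplicity of a root of Λ of absolute value 1. Then liminf_{n→∞} (−log σ̂_n(Λ))/(log n) = μ_max. -/
open Polynomial Filter

/-- `sigmaHat Λ n` is the smallest positive value of `|Λ(ζ)|` over the `n`-th roots
of unity `ζ`. -/
noncomputable def sigmaHat (Λ : Polynomial ℂ) (n : ℕ) : ℝ :=
  sInf {r : ℝ | ∃ ζ : ℂ, ζ ^ n = 1 ∧ Polynomial.eval ζ Λ ≠ 0 ∧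
    r = ‖Polynomial.eval ζ Λ‖}

noncomputable def Complex.abs : AbsoluteValue ℂ ℝ where
  toFun z := ‖z‖
  map_mul' := norm_mul
  nonneg' := norm_nonneg
  eq_zero' _ := norm_eq_zero
  add_le' := norm_add_le

theorem Complex.norm_eq_abs (z : ℂ) : ‖z‖ = Complex.abs z := rfl

theorem Complex.abs_natCast (n : ℕ) : Complex.abs (n : ℂ) = n := Complex.norm_natCast n

theorem Complex.abs_conj (z : ℂ) : Complex.abs ((starRingEnd ℂ) z) = Complex.abs z :=
  Complex.norm_conj z

theorem Complex.sq_abs (z : ℂ) : Complex.abs z ^ 2 = Complex.normSq z := Complex.sq_norm z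

theorem Complex.normSq_eq_abs (x : ℂ) : Complex.normSq x = Complex.abs x ^ 2 :=
  Complex.normSq_eq_norm_sq x

theorem Complex.abs_exp_ofReal_mul_I (x : ℝ) : Complex.abs (Complex.exp (x * Complex.I)) = 1 :=
  Complex.norm_exp_ofReal_mul_I x

theorem Complex.abs_add_mul_I (x y : ℝ) :
    Complex.abs (x + y * Complex.I) = Real.sqrt (x ^ 2 + y ^ 2) :=
  Complex.norm_add_mul_I x y

theorem Complex.abs_mul_exp_arg_mul_I (x : ℂ) :
    (Complex.abs x : ℂ) * Complex.exp (Complex.arg x * Complex.I) = x :=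
  Complex.norm_mul_exp_arg_mul_I x

open Finset

section Helpers

lemma abs_pow_sub_pow (a b : ℂ) (ha : Complex.abs a ≤ 1) (hb : Complex.abs b ≤ 1) (n : ℕ) :
    Complex.abs (a ^ n - b ^ n) ≤ n * Complex.abs (a - b) := by
  induction n with
  | zero => simp
  | succ n ih =>
    have h : a ^ (n+1) - b ^ (n+1) = (a ^ n - b ^ n) * b + a ^ n * (a - b) := by ring
    rw [h]
    have h1 : Complex.abs ((a ^ n - b ^ n) * b) ≤ Complex.abs (a ^ n - b ^ n) := by
      rw [map_mul]
      exact mul_le_of_le_one_right (Complex.abs.nonneg _) hb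
    have h2 : Complex.abs (a ^ n * (a - b)) ≤ Complex.abs (a - b) := by
      rw [map_mul]
      apply mul_le_of_le_one_left (Complex.abs.nonneg _)
      rw [map_pow]
      exact pow_le_one₀ (Complex.abs.nonneg a) ha
    calc Complex.abs _ ≤ Complex.abs ((a ^ n - b ^ n) * b) + Complex.abs (a ^ n * (a - b)) :=
          Complex.abs.add_le _ _
      _ ≤ n * Complex.abs (a - b) + Complex.abs (a - b) := add_le_add (h1.trans ih) h2
      _ = (n + 1 : ℕ) * Complex.abs (a - b) := by push_cast; ring

lemma abs_unit_eq_one {u : ℂ} {n : ℕ} (hn : u ^ n = 1) (hn0 : n ≠ 0) : Complex.abs u = 1 := by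
  have h : Complex.abs u ^ n = 1 := by rw [← map_pow, hn, map_one]
  rcases lt_trichotomy (Complex.abs u) 1 with h'|h'|h'
  · have := pow_lt_one₀ (Complex.abs.nonneg u) h' hn0
    rw [h] at this; exact absurd this (lt_irrefl 1)
  · exact h'
  · have := one_lt_pow₀ h' hn0
    rw [h] at this; exact absurd this (lt_irrefl 1)

lemma root_of_unity_spacing {u : ℂ} {n : ℕ} (hn : u ^ n = 1) (hu : u ≠ 1) (hn0 : n ≠ 0) :
    1 / n ≤ Complex.abs (u - 1) := by
  have habs : Complex.abs u = 1 := abs_unit_eq_one hn hn0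
  have hgs : ∑ i ∈ Finset.range n, u ^ i = 0 := by
    rw [geom_sum_eq hu, hn, sub_self, zero_div]
  have hkey : (n : ℝ) = Complex.abs (∑ i ∈ Finset.range n, ((1 : ℂ) - u ^ i)) := by
    rw [Finset.sum_sub_distrib, hgs, sub_zero, Finset.sum_const, Finset.card_range]
    simp [Complex.abs_natCast]
  have hbound : Complex.abs (∑ i ∈ Finset.range n, ((1 : ℂ) - u ^ i))
      ≤ n * (n * Complex.abs (u - 1)) := by
    calc Complex.abs (∑ i ∈ Finset.range n, ((1 : ℂ) - u ^ i))
        ≤ ∑ i ∈ Finset.range n, Complex.abs ((1 : ℂ) - u ^ i) :=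
          Complex.abs.sum_le _ _
      _ ≤ ∑ _i ∈ Finset.range n, n * Complex.abs (u - 1) := by
          apply Finset.sum_le_sum
          intro i hi
          have h1 : Complex.abs ((1:ℂ) ^ i - u ^ i) ≤ i * Complex.abs (1 - u) :=
            abs_pow_sub_pow 1 u (by simp) habs.le i
          simp only [one_pow] at h1
          refine h1.trans ?_
          rw [Complex.abs.map_sub 1 u]
          have hin : (i : ℝ) ≤ n := by exact_mod_cast (Finset.mem_range.mp hi).le
          have := Complex.abs.nonneg (u - 1)
          nlinarith
      _ = n * (n * Complex.abs (u - 1)) := by rw [Finset.sum_const, Finset.card_range]; ring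
  have hnpos : (0 : ℝ) < n := by exact_mod_cast Nat.pos_of_ne_zero hn0
  have h2 : (n : ℝ) ≤ n * (n * Complex.abs (u - 1)) := hkey.le.trans hbound
  rw [div_le_iff₀ hnpos]
  nlinarith

lemma finset_exists_pos_lb {α : Type*} (s : Finset α) (f : α → ℝ) (h : ∀ x ∈ s, 0 < f x) :
    ∃ ε : ℝ, 0 < ε ∧ ∀ x ∈ s, ε ≤ f x := by
  classical
  induction s using Finset.induction_on with
  | empty => exact ⟨1, one_pos, by simp⟩
  | @insert a s ha ih =>
    obtain ⟨ε, hε, hall⟩ := ih (fun x hx => h x (Finset.mem_insert_of_mem hx))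
    refine ⟨min ε (f a), lt_min hε (h a (Finset.mem_insert_self a s)), ?_⟩
    intro x hx
    rcases Finset.mem_insert.mp hx with rfl | hx
    · exact min_le_right _ _
    · exact (min_le_left _ _).trans (hall x hx)

lemma exists_uniform_order (s : Finset ℂ) :
    ∃ L : ℕ, 0 < L ∧ ∀ z ∈ s, (∃ m : ℕ, 0 < m ∧ z ^ m = 1) → z ^ L = 1 := by
  classical
  induction s using Finset.induction_on with
  | empty => exact ⟨1, one_pos, by simp⟩
  | @insert a s ha ih =>
    obtain ⟨L, hL, hall⟩ := ih
    by_cases haru : ∃ m : ℕ, 0 < m ∧ a ^ m = 1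
    · obtain ⟨m, hm, ham⟩ := haru
      refine ⟨L * m, Nat.mul_pos hL hm, ?_⟩
      intro z hz hru
      rcases Finset.mem_insert.mp hz with rfl | hz
      · rw [mul_comm, pow_mul, ham, one_pow]
      · rw [pow_mul, hall z hz hru, one_pow]
    · refine ⟨L, hL, ?_⟩
      intro z hz hz'
      rcases Finset.mem_insert.mp hz with rfl | hz
      · exact absurd hz' haru
      · exact hall z hz hz'

noncomputable def SK (K : ℕ) (w : ℂ) : ℂ := ∑ m ∈ Finset.range K, w ^ m

lemma pair_tendsto {w : ℂ} (hw : Complex.abs w = 1) :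
    Tendsto (fun N : ℕ => (∑ n ∈ Finset.range N, w ^ (n+1)) / (N:ℂ)) atTop
      (nhds (if w = 1 then 1 else 0)) := by
  by_cases h1 : w = 1
  · rw [if_pos h1]
    have heq : ∀ᶠ N : ℕ in atTop, (∑ n ∈ Finset.range N, w ^ (n+1)) / (N:ℂ) = 1 := by
      filter_upwards [eventually_ge_atTop 1] with N hN
      rw [h1]
      simp only [one_pow, Finset.sum_const, Finset.card_range, nsmul_eq_mul, mul_one]
      rw [div_self (by exact_mod_cast Nat.one_le_iff_ne_zero.mp hN)]
    exact Tendsto.congr' (EventuallyEq.symm heq) tendsto_const_nhds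
  · rw [if_neg h1]
    refine squeeze_zero_norm (fun N => ?_) (tendsto_const_div_atTop_nhds_zero_nat
      (2 / Complex.abs (w - 1)))
    have hsum : ∑ n ∈ Finset.range N, w ^ (n+1) = ((w ^ N - 1) / (w - 1)) * w := by
      rw [← geom_sum_eq h1, Finset.sum_mul]
      exact Finset.sum_congr rfl fun n _ => (pow_succ w n).symm
    rw [Complex.norm_eq_abs, map_div₀, Complex.abs_natCast, hsum, map_mul, map_div₀, hw,
      mul_one]
    rcases Nat.eq_zero_or_pos N with rfl | hN
    · simp
    · have hNpos : (0:ℝ) < N := by exact_mod_cast hN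
      have hw1pos : 0 < Complex.abs (w - 1) := by
        rw [AbsoluteValue.pos_iff]
        exact sub_ne_zero.mpr h1
      gcongr
      calc Complex.abs (w ^ N - 1) ≤ Complex.abs (w ^ N) + Complex.abs 1 :=
            Complex.abs.sub_le_add _ _
        _ ≤ 2 := by rw [map_pow, hw, one_pow, map_one]; norm_num

lemma fejer_avg (K : ℕ) {z : ℂ} (hz : Complex.abs z = 1) (hirr : ∀ m : ℕ, 0 < m → z ^ m ≠ 1) :
    Tendsto (fun N : ℕ =>
        (∑ n ∈ Finset.range N, Complex.abs (SK K (z ^ (n+1))) ^ 2) / (N:ℝ))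
      atTop (nhds K) := by
  have hz0 : z ≠ 0 := by
    intro h; rw [h] at hz; simp at hz
  have hzz : z * (starRingEnd ℂ) z = 1 := by
    rw [Complex.mul_conj, Complex.normSq_eq_abs, hz]; norm_num
  have hcancel : ∀ a b : ℕ, a < b → z ^ a = z ^ b → False := by
    intro a b hab h
    have h2 : z ^ (a + (b - a)) = z ^ a := by
      rw [show a + (b - a) = b by omega, ← h]
    rw [pow_add] at h2
    nth_rewrite 2 [← mul_one (z ^ a)] at h2
    have h3 := mul_left_cancel₀ (pow_ne_zero a hz0) h2
    exact hirr (b - a) (by omega) h3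
  have hw1 : ∀ a b : ℕ, (z ^ a * (starRingEnd ℂ) z ^ b = 1) ↔ a = b := by
    intro a b
    constructor
    · intro h
      have h2 : z ^ a * ((starRingEnd ℂ) z ^ b * z ^ b) = 1 * z ^ b := by
        rw [← mul_assoc, h]
      rw [← mul_pow, mul_comm ((starRingEnd ℂ) z) z, hzz, one_pow, mul_one, one_mul] at h2
      rcases lt_trichotomy a b with h'|h'|h'
      · exact absurd (hcancel a b h' h2) not_false
      · exact h'
      · exact absurd (hcancel b a h' h2.symm) not_false
    · rintro rfl
      rw [← mul_pow, hzz, one_pow]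
  have habsw : ∀ a b : ℕ, Complex.abs (z ^ a * (starRingEnd ℂ) z ^ b) = 1 := by
    intro a b
    rw [map_mul, map_pow, map_pow, Complex.abs_conj, hz, one_pow, one_pow, mul_one]
  set w : ℕ → ℕ → ℂ := fun a b => z ^ a * (starRingEnd ℂ) z ^ b with hwdef
  have hCAeq : ∀ N : ℕ, (∑ n ∈ Finset.range N, (SK K (z ^ (n+1)) *
      (starRingEnd ℂ) (SK K (z ^ (n+1))))) =
      ∑ a ∈ Finset.range K, ∑ b ∈ Finset.range K,
        (∑ n ∈ Finset.range N, (w a b) ^ (n+1)) := by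
    intro N
    have hexp : ∀ n : ℕ, SK K (z ^ (n+1)) * (starRingEnd ℂ) (SK K (z ^ (n+1))) =
        ∑ a ∈ Finset.range K, ∑ b ∈ Finset.range K, (w a b) ^ (n+1) := by
      intro n
      rw [SK, map_sum, Finset.sum_mul_sum]
      apply Finset.sum_congr rfl; intro a _
      apply Finset.sum_congr rfl; intro b _
      simp only [map_pow, hwdef]
      ring
    rw [Finset.sum_congr rfl fun n _ => hexp n]
    rw [Finset.sum_comm]
    apply Finset.sum_congr rfl; intro a _
    rw [Finset.sum_comm]
  have hCA : Tendsto (fun N : ℕ => (∑ n ∈ Finset.range N, (SK K (z ^ (n+1)) *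
      (starRingEnd ℂ) (SK K (z ^ (n+1))))) / (N:ℂ)) atTop (nhds K) := by
    have h2 : Tendsto (fun N : ℕ => ∑ a ∈ Finset.range K, ∑ b ∈ Finset.range K,
        ((∑ n ∈ Finset.range N, (w a b) ^ (n+1)) / (N:ℂ))) atTop
        (nhds (∑ a ∈ Finset.range K, ∑ b ∈ Finset.range K, if a = b then (1:ℂ) else 0)) := by
      apply tendsto_finset_sum
      intro a _
      apply tendsto_finset_sum
      intro b _
      have hp := pair_tendsto (habsw a b)
      rwa [show ((if w a b = 1 then (1:ℂ) else 0) = if a = b then (1:ℂ) else 0) from by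
        by_cases h : a = b
        · rw [if_pos h, if_pos ((hw1 a b).mpr h)]
        · rw [if_neg h, if_neg (fun hc => h ((hw1 a b).mp hc))]] at hp
    have h3 : (∑ a ∈ Finset.range K, ∑ b ∈ Finset.range K, if a = b then (1:ℂ) else 0) = K := by
      have hh : ∀ a ∈ Finset.range K, (∑ b ∈ Finset.range K, if a = b then (1:ℂ) else 0) = 1 := by
        intro a ha
        rw [Finset.sum_ite_eq]
        exact if_pos ha
      rw [Finset.sum_congr rfl hh, Finset.sum_const, Finset.card_range, nsmul_eq_mul, mul_one]
    rw [h3] at h2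
    apply h2.congr
    intro N
    rw [hCAeq N]
    simp only [Finset.sum_div]
  have hre : ∀ N : ℕ, ((∑ n ∈ Finset.range N, Complex.abs (SK K (z ^ (n+1))) ^ 2) / (N:ℝ)) =
      (((∑ n ∈ Finset.range N, (SK K (z ^ (n+1)) *
        (starRingEnd ℂ) (SK K (z ^ (n+1))))) / (N:ℂ))).re := by
    intro N
    have hh : (∑ n ∈ Finset.range N, (SK K (z ^ (n+1)) * (starRingEnd ℂ) (SK K (z ^ (n+1))))) =
        ((∑ n ∈ Finset.range N, Complex.abs (SK K (z ^ (n+1))) ^ 2 : ℝ) : ℂ) := by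
      push_cast
      apply Finset.sum_congr rfl
      intro n _
      rw [Complex.mul_conj]
      norm_cast
      exact (Complex.sq_abs _).symm
    rw [hh, ← Complex.ofReal_natCast, ← Complex.ofReal_div, Complex.ofReal_re]
  have hfinal := (Complex.continuous_re.tendsto _).comp hCA
  simp only [Function.comp_def, Complex.natCast_re] at hfinal
  exact Tendsto.congr (fun N => (hre N).symm) hfinal

lemma sum_range_id_le (K : ℕ) : (∑ m ∈ Finset.range K, (m:ℝ)) ≤ (K:ℝ)^2 / 2 := by
  induction K with
  | zero => simp
  | succ k ih =>
    rw [Finset.sum_range_succ]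
    have hnn : (0:ℝ) ≤ ∑ m ∈ Finset.range k, (m:ℝ) :=
      Finset.sum_nonneg fun m _ => Nat.cast_nonneg m
    push_cast
    push_cast at ih
    nlinarith

lemma fejer_lower {K : ℕ} {w : ℂ} (hK : 0 < K) (hw : Complex.abs w = 1)
    (hclose : Complex.abs (w - 1) ≤ 1 / K) :
    (K:ℝ)^2 / 4 ≤ Complex.abs (SK K w) ^ 2 := by
  have hKpos : (0:ℝ) < K := by exact_mod_cast hK
  have hgauss : (∑ m ∈ Finset.range K, (m:ℝ)) ≤ (K:ℝ)^2 / 2 := sum_range_id_le K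
  have hdiff : Complex.abs ((K:ℂ) - SK K w) ≤ (K:ℝ) / 2 := by
    have hKsum : (K:ℂ) = ∑ _m ∈ Finset.range K, (1:ℂ) := by
      rw [Finset.sum_const, Finset.card_range, nsmul_eq_mul, mul_one]
    calc Complex.abs ((K:ℂ) - SK K w)
        = Complex.abs (∑ m ∈ Finset.range K, ((1:ℂ) - w ^ m)) := by
          rw [Finset.sum_sub_distrib, ← hKsum]; rfl
      _ ≤ ∑ m ∈ Finset.range K, Complex.abs ((1:ℂ) - w ^ m) := Complex.abs.sum_le _ _
      _ ≤ ∑ m ∈ Finset.range K, (m:ℝ) * (1 / K) := by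
          apply Finset.sum_le_sum
          intro m _
          have h1 : Complex.abs ((1:ℂ) ^ m - w ^ m) ≤ m * Complex.abs (1 - w) :=
            abs_pow_sub_pow 1 w (by simp) hw.le m
          simp only [one_pow] at h1
          refine h1.trans ?_
          rw [Complex.abs.map_sub 1 w]
          exact mul_le_mul_of_nonneg_left hclose (Nat.cast_nonneg m)
      _ ≤ (K:ℝ) / 2 := by
          rw [← Finset.sum_mul]
          calc (∑ m ∈ Finset.range K, (m:ℝ)) * (1 / K) ≤ ((K:ℝ)^2/2) * (1/K) := by
                apply mul_le_mul_of_nonneg_right hgauss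
                positivity
            _ = (K:ℝ) / 2 := by field_simp
  have habs : (K:ℝ) / 2 ≤ Complex.abs (SK K w) := by
    have h2 : Complex.abs ((K:ℂ)) ≤ Complex.abs ((K:ℂ) - SK K w) + Complex.abs (SK K w) := by
      calc Complex.abs ((K:ℂ)) = Complex.abs (((K:ℂ) - SK K w) + SK K w) := by ring_nf
        _ ≤ _ := Complex.abs.add_le _ _
    rw [Complex.abs_natCast] at h2
    linarith [h2.trans (add_le_add_left hdiff _)]
  calc (K:ℝ)^2/4 = ((K:ℝ)/2)^2 := by ring
    _ ≤ _ := pow_le_pow_left₀ (by positivity) habs 2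

lemma exists_good_n (s : Finset ℂ) (h1 : ∀ z ∈ s, Complex.abs z = 1)
    (h2 : ∀ z ∈ s, ∀ m : ℕ, 0 < m → z ^ m ≠ 1) (N₀ : ℕ) :
    ∃ n : ℕ, N₀ ≤ n ∧ 0 < n ∧
      ∀ z ∈ s, 1 / (4 * ((s.card : ℝ) + 1)) ≤ Complex.abs (z ^ n - 1) := by
  by_contra hcon
  push_neg at hcon
  set K : ℕ := 4 * (s.card + 1) with hKdef
  have hK : 0 < K := by positivity
  have hKcast : (K:ℝ) = 4 * ((s.card : ℝ) + 1) := by rw [hKdef]; push_cast; ring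
  have hbad : ∀ n : ℕ, N₀ ≤ n → 0 < n → ∃ z ∈ s, Complex.abs (z ^ n - 1) < 1 / K := by
    intro n hn hn'
    obtain ⟨z, hz, hlt⟩ := hcon n hn hn'
    exact ⟨z, hz, by rwa [hKcast]⟩
  set g : ℕ → ℝ := fun n => ∑ z ∈ s, Complex.abs (SK K (z ^ (n+1))) ^ 2 with hgdef
  have hgnn : ∀ n, 0 ≤ g n := by
    intro n
    apply Finset.sum_nonneg
    intro z _
    positivity
  have hglb : ∀ n : ℕ, N₀ ≤ n + 1 → (K:ℝ)^2/4 ≤ g n := by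
    intro n hn
    obtain ⟨z, hzs, hzlt⟩ := hbad (n+1) hn (Nat.succ_pos n)
    have hterm : (K:ℝ)^2/4 ≤ Complex.abs (SK K (z ^ (n+1))) ^ 2 := by
      apply fejer_lower hK
      · rw [map_pow, h1 z hzs, one_pow]
      · exact hzlt.le
    calc (K:ℝ)^2/4 ≤ Complex.abs (SK K (z ^ (n+1))) ^ 2 := hterm
      _ ≤ g n := Finset.single_le_sum (f := fun z => Complex.abs (SK K (z ^ (n+1))) ^ 2)
          (fun z _ => by positivity) hzs
  have hlimit : Tendsto (fun N : ℕ => (∑ n ∈ Finset.range N, g n) / (N:ℝ)) atTop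
      (nhds (s.card * K)) := by
    have hswap : ∀ N : ℕ, (∑ n ∈ Finset.range N, g n) / (N:ℝ) =
        ∑ z ∈ s, (∑ n ∈ Finset.range N, Complex.abs (SK K (z ^ (n+1))) ^ 2) / (N:ℝ) := by
      intro N
      rw [hgdef]
      rw [Finset.sum_comm]
      simp only [Finset.sum_div]
    have ht := tendsto_finset_sum (s := s) (f := fun z (N : ℕ) =>
        (∑ n ∈ Finset.range N, Complex.abs (SK K (z ^ (n+1))) ^ 2) / (N:ℝ))
        (fun z hz => fejer_avg K (h1 z hz) (h2 z hz))
    rw [Finset.sum_const, nsmul_eq_mul] at ht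
    exact Tendsto.congr (fun N => (hswap N).symm) ht
  have hlower : ∀ N : ℕ, ((K:ℝ)^2/4) * ((N:ℝ) - N₀) / N
      ≤ (∑ n ∈ Finset.range N, g n) / (N:ℝ) := by
    intro N
    rcases Nat.eq_zero_or_pos N with rfl | hN
    · simp
    have hNpos : (0:ℝ) < N := by exact_mod_cast hN
    rw [div_le_div_iff_of_pos_right hNpos]
    rcases le_or_gt (N:ℝ) (N₀:ℝ) with h | h
    · calc ((K:ℝ)^2/4) * ((N:ℝ) - N₀) ≤ 0 := by nlinarith [sq_nonneg (K:ℝ)]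
        _ ≤ _ := Finset.sum_nonneg fun n _ => hgnn n
    have hN₀N : N₀ ≤ N := by exact_mod_cast h.le
    calc ((K:ℝ)^2/4) * ((N:ℝ) - N₀) ≤ ((K:ℝ)^2/4) * ((N - N₀ : ℕ) : ℝ) := by
          apply mul_le_mul_of_nonneg_left _ (by positivity)
          rw [Nat.cast_sub hN₀N]
      _ = ∑ _n ∈ Finset.Ico N₀ N, ((K:ℝ)^2/4) := by
          rw [Finset.sum_const, Nat.card_Ico, nsmul_eq_mul]; ring
      _ ≤ ∑ n ∈ Finset.Ico N₀ N, g n := by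
          apply Finset.sum_le_sum
          intro n hn
          exact hglb n (by have := (Finset.mem_Ico.mp hn).1; omega)
      _ ≤ ∑ n ∈ Finset.range N, g n := by
          apply Finset.sum_le_sum_of_subset_of_nonneg
          · intro n hn
            rw [Finset.mem_range]
            exact (Finset.mem_Ico.mp hn).2
          · intro n _ _; exact hgnn n
  have hlower_lim : Tendsto (fun N : ℕ => ((K:ℝ)^2/4) * ((N:ℝ) - N₀) / N) atTop
      (nhds ((K:ℝ)^2/4)) := by
    have heq : ∀ᶠ N : ℕ in atTop, ((K:ℝ)^2/4) * ((N:ℝ) - N₀) / N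
        = (K:ℝ)^2/4 - ((K:ℝ)^2/4 * N₀) / N := by
      filter_upwards [eventually_ge_atTop 1] with N hN
      have hNne : (N:ℝ) ≠ 0 := by
        have : (0:ℝ) < N := by exact_mod_cast hN
        exact this.ne'
      field_simp
    have ht : Tendsto (fun N : ℕ => (K:ℝ)^2/4 - ((K:ℝ)^2/4 * N₀) / N) atTop
        (nhds ((K:ℝ)^2/4 - 0)) :=
      tendsto_const_nhds.sub (tendsto_const_div_atTop_nhds_zero_nat _)
    rw [sub_zero] at ht
    exact Tendsto.congr' (EventuallyEq.symm heq) ht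
  have hfin : (K:ℝ)^2/4 ≤ s.card * K :=
    le_of_tendsto_of_tendsto' hlower_lim hlimit hlower
  rw [hKcast] at hfin
  nlinarith [Nat.cast_nonneg (α := ℝ) s.card]

lemma abs_exp_I_sub_one (t : ℝ) : Complex.abs (Complex.exp (t * Complex.I) - 1) ≤ |t| := by
  have h : Complex.exp (t * Complex.I) - 1 =
      Complex.ofReal (Real.cos t - 1) + Complex.ofReal (Real.sin t) * Complex.I := by
    rw [Complex.exp_mul_I]
    push_cast
    ring
  rw [h, Complex.abs_add_mul_I]
  rw [show |t| = Real.sqrt (t^2) from (Real.sqrt_sq_eq_abs t).symm]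
  apply Real.sqrt_le_sqrt
  have h1 : 1 - t^2/2 ≤ Real.cos t := Real.one_sub_sq_div_two_le_cos
  nlinarith [Real.sin_sq_add_cos_sq t]

lemma abs_exp_I_sub_exp_I (x y : ℝ) :
    Complex.abs (Complex.exp (x * Complex.I) - Complex.exp (y * Complex.I)) ≤ |x - y| := by
  have h : Complex.exp (x * Complex.I) - Complex.exp (y * Complex.I) =
      Complex.exp (y * Complex.I) * (Complex.exp ((x - y : ℝ) * Complex.I) - 1) := by
    rw [mul_sub, mul_one, ← Complex.exp_add]
    push_cast
    ring_nf
  rw [h, map_mul, Complex.abs_exp_ofReal_mul_I, one_mul]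
  exact abs_exp_I_sub_one _

lemma exp_two_pi_int_div_pow {n : ℕ} (hn : 0 < n) (k : ℤ) :
    (Complex.exp ((2 * Real.pi * (k:ℝ) / n : ℝ) * Complex.I)) ^ n = 1 := by
  rw [← Complex.exp_nat_mul]
  rw [show ((n:ℂ) * ((2 * Real.pi * (k:ℝ) / n : ℝ) * Complex.I)) = (k:ℂ) * (2 * Real.pi * Complex.I) by
    have hne : (n:ℂ) ≠ 0 := Nat.cast_ne_zero.mpr hn.ne'
    push_cast
    field_simp]
  exact_mod_cast Complex.exp_int_mul_two_pi_mul_I k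

lemma exists_close_nonroot (Q : Polynomial ℂ) (hQ : Q ≠ 0) {ξ : ℂ} (hξ : Complex.abs ξ = 1)
    {n : ℕ} (hn : Q.natDegree + 2 < n) :
    ∃ ζ : ℂ, ζ ^ n = 1 ∧ Q.eval ζ ≠ 0 ∧
      Complex.abs (ζ - ξ) ≤ (7 * (Q.natDegree + 2) : ℝ) / n := by
  have hn0 : 0 < n := by omega
  have hnR : (0:ℝ) < n := by exact_mod_cast hn0
  set D := Q.natDegree with hD
  set φ := Complex.arg ξ with hφ
  have hξeq : Complex.exp ((φ:ℂ) * Complex.I) = ξ := by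
    have := Complex.abs_mul_exp_arg_mul_I ξ
    rwa [hξ, Complex.ofReal_one, one_mul] at this
  set a : ℝ := n * φ / (2 * Real.pi) with ha
  set k : ℤ := ⌊a⌋ with hk
  set g : ℕ → ℂ := fun t => Complex.exp ((2 * Real.pi * ((k:ℝ) + t) / n : ℝ) * Complex.I)
    with hg
  have hpow : ∀ t : ℕ, (g t) ^ n = 1 := by
    intro t
    have := exp_two_pi_int_div_pow hn0 (k + t)
    rw [hg]
    simp only []
    convert this using 4
    push_cast
    ring
  have hdist : ∀ t : ℕ, t ≤ D + 1 → Complex.abs (g t - ξ) ≤ (7 * (D + 2) : ℝ) / n := by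
    intro t ht
    rw [hg]
    simp only []
    rw [← hξeq]
    refine (abs_exp_I_sub_exp_I _ _).trans ?_
    have hfl1 : a - 1 < (k:ℝ) := by
      rw [hk]; exact Int.sub_one_lt_floor a
    have hfl2 : (k:ℝ) ≤ a := Int.floor_le a
    have hpi : 0 < Real.pi := Real.pi_pos
    have hkey : 2 * Real.pi * ((k:ℝ) + t) / n - φ = (2 * Real.pi / n) * ((k:ℝ) + t - a) := by
      rw [ha]
      field_simp
    rw [hkey, abs_mul]
    have h1 : |2 * Real.pi / n| = 2 * Real.pi / n := abs_of_pos (by positivity)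
    have h2 : |(k:ℝ) + t - a| ≤ (t:ℝ) + 1 := by
      rw [abs_le]
      constructor <;> nlinarith [Nat.cast_nonneg (α := ℝ) t]
    rw [h1]
    have hpi7 : 2 * Real.pi ≤ 7 := by nlinarith [Real.pi_lt_d2]
    have htD : (t:ℝ) + 1 ≤ (D:ℝ) + 2 := by
      have : (t:ℝ) ≤ (D:ℝ) + 1 := by exact_mod_cast ht
      linarith
    calc 2 * Real.pi / n * |(k:ℝ) + t - a| ≤ 2 * Real.pi / n * ((D:ℝ) + 2) := by
          apply mul_le_mul_of_nonneg_left (h2.trans htD) (by positivity)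
      _ ≤ 7 / n * ((D:ℝ) + 2) := by
          apply mul_le_mul_of_nonneg_right _ (by positivity)
          exact (div_le_div_iff_of_pos_right hnR).mpr hpi7
      _ = (7 * ((D:ℝ) + 2)) / n := by ring
  have hinj : ∀ t s : ℕ, t < n → s < n → g t = g s → t = s := by
    intro t s htn hsn hts
    rw [hg] at hts
    simp only [] at hts
    have hdiv : Complex.exp ((2 * Real.pi * ((k:ℝ) + t) / n : ℝ) * Complex.I -
        (2 * Real.pi * ((k:ℝ) + s) / n : ℝ) * Complex.I) = 1 := by
      rw [Complex.exp_sub, hts, div_self (Complex.exp_ne_zero _)]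
    rw [Complex.exp_eq_one_iff] at hdiv
    obtain ⟨m, hm⟩ := hdiv
    have him := congrArg Complex.im hm
    simp only [Complex.sub_im, Complex.mul_im, Complex.ofReal_re, Complex.ofReal_im,
      Complex.I_re, Complex.I_im, Complex.intCast_im, Complex.intCast_re, Complex.mul_re,
      Complex.re_ofNat, Complex.im_ofNat, mul_zero, mul_one, zero_mul, sub_zero, zero_add,
      add_zero, zero_sub, neg_zero] at him
    -- him : real equation with /n
    have hpi : 0 < Real.pi := Real.pi_pos
    have him2 := congrArg (fun x : ℝ => x * n) him
    simp only [sub_mul, div_mul_cancel₀ _ hnR.ne'] at him2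
    have hts' : (t:ℝ) - s = m * n := by
      have hkey : (2 * Real.pi) * ((t:ℝ) - s) = (2 * Real.pi) * (m * n) := by
        linear_combination him2
      have h2pi : (2 * Real.pi) ≠ 0 := by positivity
      exact mul_left_cancel₀ h2pi hkey
    have htsZ : (t:ℤ) - s = m * n := by exact_mod_cast hts'
    have htn' : (t:ℤ) < n := by exact_mod_cast htn
    have hsn' : (s:ℤ) < n := by exact_mod_cast hsn
    have ht0 : (0:ℤ) ≤ t := Int.ofNat_nonneg t
    have hs0 : (0:ℤ) ≤ s := Int.ofNat_nonneg s
    have : m = 0 := by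
      rcases lt_trichotomy m 0 with h|h|h
      · have h1 : m ≤ -1 := by omega
        have h2 : m * n ≤ (-1) * n :=
          mul_le_mul_of_nonneg_right h1 (Int.ofNat_nonneg n)
        linarith
      · exact h
      · have h1 : 1 ≤ m := by omega
        have h2 : (n:ℤ) ≤ m * n := le_mul_of_one_le_left (Int.ofNat_nonneg n) h1
        linarith
    have : (t:ℤ) = s := by rw [this] at htsZ; omega
    exact_mod_cast this
  -- find a nonroot among candidates
  have hnonroot : ∃ t ≤ D + 1, Q.eval (g t) ≠ 0 := by
    by_contra hcon
    push_neg at hcon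
    have hmap : ∀ t ∈ Finset.range (D + 2), g t ∈ Q.roots.toFinset := by
      intro t ht
      rw [Multiset.mem_toFinset, Polynomial.mem_roots hQ]
      have ht' := Finset.mem_range.mp ht
      exact hcon t (by omega)
    have hinj' : Set.InjOn g (Finset.range (D + 2)) := by
      intro t ht s hs hts
      have ht' := Finset.mem_range.mp ht
      have hs' := Finset.mem_range.mp hs
      exact hinj t s (by omega) (by omega) hts
    have hcard := Finset.card_le_card_of_injOn g hmap hinj'
    rw [Finset.card_range] at hcard
    have h1 := Multiset.toFinset_card_le Q.roots
    have h2 := Polynomial.card_roots' Q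
    omega
  obtain ⟨t, ht, hroot⟩ := hnonroot
  exact ⟨g t, hpow t, hroot, hdist t ht⟩


def sigmaSet (Λ : Polynomial ℂ) (n : ℕ) : Set ℝ :=
  {r : ℝ | ∃ ζ : ℂ, ζ ^ n = 1 ∧ Polynomial.eval ζ Λ ≠ 0 ∧
    r = Complex.abs (Polynomial.eval ζ Λ)}

lemma sigmaHat_eq (Λ : Polynomial ℂ) (n : ℕ) : sigmaHat Λ n = sInf (sigmaSet Λ n) := rfl

lemma sigmaSet_bddBelow (Λ : Polynomial ℂ) (n : ℕ) : BddBelow (sigmaSet Λ n) := by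
  refine ⟨0, ?_⟩
  rintro r ⟨ζ, -, -, rfl⟩
  exact Complex.abs.nonneg _

lemma sigmaHat_le (Λ : Polynomial ℂ) (n : ℕ) {ζ : ℂ} (h1 : ζ ^ n = 1)
    (h2 : Polynomial.eval ζ Λ ≠ 0) :
    sigmaHat Λ n ≤ Complex.abs (Polynomial.eval ζ Λ) :=
  csInf_le (sigmaSet_bddBelow Λ n) ⟨ζ, h1, h2, rfl⟩

lemma le_sigmaHat (Λ : Polynomial ℂ) (n : ℕ) {b : ℝ}
    (hne : (sigmaSet Λ n).Nonempty)
    (hb : ∀ ζ : ℂ, ζ ^ n = 1 → Polynomial.eval ζ Λ ≠ 0 →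
      b ≤ Complex.abs (Polynomial.eval ζ Λ)) :
    b ≤ sigmaHat Λ n := by
  apply le_csInf hne
  rintro r ⟨ζ, h1, h2, rfl⟩
  exact hb ζ h1 h2

lemma sigmaSet_finite (Λ : Polynomial ℂ) {n : ℕ} (hn : 0 < n) :
    (sigmaSet Λ n).Finite := by
  have h1 : {ζ : ℂ | ζ ^ n = 1}.Finite := by
    apply Set.Finite.subset (Polynomial.finite_setOf_isRoot
      (Polynomial.X_pow_sub_C_ne_zero (R := ℂ) hn 1))
    intro ζ hζ
    simp only [Set.mem_setOf_eq, Polynomial.IsRoot, Polynomial.eval_sub, Polynomial.eval_pow,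
      Polynomial.eval_X, Polynomial.eval_C]
    rw [Set.mem_setOf_eq] at hζ
    rw [hζ, sub_self]
  apply Set.Finite.subset (Set.Finite.image (fun ζ => Complex.abs (Polynomial.eval ζ Λ)) h1)
  rintro r ⟨ζ, h2, h3, rfl⟩
  exact ⟨ζ, h2, rfl⟩

lemma sigmaHat_pos (Λ : Polynomial ℂ) {n : ℕ} (hn : 0 < n)
    (hne : (sigmaSet Λ n).Nonempty) : 0 < sigmaHat Λ n := by
  have hmem := Set.Nonempty.csInf_mem hne (sigmaSet_finite Λ hn)
  obtain ⟨ζ, -, h2, heq⟩ := hmem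
  rw [sigmaHat_eq, heq, AbsoluteValue.pos_iff]
  exact h2


lemma eval_abs_le (R : Polynomial ℂ) {ζ : ℂ} (hζ : Complex.abs ζ ≤ 1) :
    Complex.abs (R.eval ζ) ≤
      ∑ i ∈ Finset.range (R.natDegree + 1), Complex.abs (R.coeff i) := by
  rw [Polynomial.eval_eq_sum_range]
  refine (Complex.abs.sum_le _ _).trans ?_
  apply Finset.sum_le_sum
  intro i _
  rw [map_mul, map_pow]
  exact mul_le_of_le_one_right (Complex.abs.nonneg _)
    (pow_le_one₀ (Complex.abs.nonneg _) hζ)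

lemma exists_eval_upper (Q : Polynomial ℂ) (ξ : ℂ) :
    ∃ C : ℝ, 0 < C ∧ ∀ ζ : ℂ, Complex.abs ζ ≤ 1 →
      Complex.abs (Q.eval ζ) ≤ C * Complex.abs (ζ - ξ) ^ (Q.rootMultiplicity ξ) := by
  obtain ⟨R, hR⟩ := Polynomial.pow_rootMultiplicity_dvd Q ξ
  refine ⟨(∑ i ∈ Finset.range (R.natDegree + 1), Complex.abs (R.coeff i)) + 1, ?_, ?_⟩
  · have : (0:ℝ) ≤ ∑ i ∈ Finset.range (R.natDegree + 1), Complex.abs (R.coeff i) :=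
      Finset.sum_nonneg fun i _ => Complex.abs.nonneg _
    linarith
  intro ζ hζ
  set μ := Q.rootMultiplicity ξ with hμ
  rw [hR, Polynomial.eval_mul, Polynomial.eval_pow, Polynomial.eval_sub, Polynomial.eval_X,
    Polynomial.eval_C, map_mul, map_pow, mul_comm]
  apply mul_le_mul_of_nonneg_right _ (pow_nonneg (Complex.abs.nonneg _) _)
  have h := eval_abs_le R hζ
  linarith

set_option maxHeartbeats 1000000 in
lemma sigma_lower (Q : Polynomial ℂ) (hQ : Q ≠ 0)
    (μmax : ℕ)
    (hub : ∀ ρ : ℂ, Complex.abs ρ = 1 → Q.IsRoot ρ → Q.rootMultiplicity ρ ≤ μmax)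
    (hroot : ∃ ξ : ℂ, Complex.abs ξ = 1 ∧ Q.IsRoot ξ) :
    ∃ C : ℝ, 0 < C ∧ ∀ N : ℕ, ∃ n : ℕ, N ≤ n ∧ Q.natDegree + 2 < n ∧
      ∀ ζ : ℂ, ζ ^ n = 1 → Q.eval ζ ≠ 0 →
        C / (n:ℝ) ^ μmax ≤ Complex.abs (Q.eval ζ) := by
  classical
  set rts : Finset ℂ := Q.roots.toFinset with hrts
  obtain ⟨ξ0, hξ0abs, hξ0root⟩ := hroot
  have hξ0mem : ξ0 ∈ rts := by
    rw [hrts, Multiset.mem_toFinset, Polynomial.mem_roots hQ]; exact hξ0root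
  have hrtsne : rts.Nonempty := ⟨ξ0, hξ0mem⟩
  obtain ⟨δ1, hδ1pos, hδ1⟩ := finset_exists_pos_lb (rts.offDiag)
      (fun p => Complex.abs (p.1 - p.2)) (by
    intro p hp
    rw [AbsoluteValue.pos_iff, sub_ne_zero]
    exact (Finset.mem_offDiag.mp hp).2.2)
  obtain ⟨δ0, hδ0pos, hδ0⟩ := finset_exists_pos_lb
      (rts.filter (fun ρ => Complex.abs ρ ≠ 1)) (fun ρ => |Complex.abs ρ - 1|) (by
    intro ρ hρ
    rw [abs_pos, sub_ne_zero]
    exact (Finset.mem_filter.mp hρ).2)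
  set c₀ : ℝ := min (min (δ1/2) δ0) 1 with hc₀
  have hc₀pos : 0 < c₀ := lt_min (lt_min (by linarith) hδ0pos) one_pos
  have hc₀le1 : c₀ ≤ 1 := min_le_right _ _
  have hc₀δ1 : c₀ ≤ δ1 / 2 := le_trans (min_le_left _ _) (min_le_left _ _)
  have hc₀δ0 : c₀ ≤ δ0 := le_trans (min_le_left _ _) (min_le_right _ _)
  obtain ⟨L, hLpos, hL⟩ := exists_uniform_order rts
  set irr : Finset ℂ :=
    rts.filter (fun ρ => Complex.abs ρ = 1 ∧ ¬∃ m : ℕ, 0 < m ∧ ρ ^ m = 1) with hirr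
  set s : Finset ℂ := irr.image (fun ρ => ρ ^ L) with hs
  have hs1 : ∀ z ∈ s, Complex.abs z = 1 := by
    intro z hz
    obtain ⟨ρ, hρ, rfl⟩ := Finset.mem_image.mp hz
    rw [map_pow, (Finset.mem_filter.mp hρ).2.1, one_pow]
  have hs2 : ∀ z ∈ s, ∀ m : ℕ, 0 < m → z ^ m ≠ 1 := by
    intro z hz m hm hzm
    obtain ⟨ρ, hρ, rfl⟩ := Finset.mem_image.mp hz
    refine (Finset.mem_filter.mp hρ).2.2 ⟨L * m, Nat.mul_pos hLpos hm, ?_⟩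
    rw [pow_mul]; exact hzm
  set cc : ℝ := min (1 / (4 * ((s.card : ℝ) + 1))) 1 with hcc
  have hccpos : 0 < cc := lt_min (by positivity) one_pos
  have hccle1 : cc ≤ 1 := min_le_right _ _
  set dd : ℕ := Q.natDegree with hdd
  have hlc : 0 < Complex.abs Q.leadingCoeff := by
    rw [AbsoluteValue.pos_iff]; exact Polynomial.leadingCoeff_ne_zero.mpr hQ
  refine ⟨Complex.abs Q.leadingCoeff * c₀ ^ (2 * dd) * cc ^ μmax,
    mul_pos (mul_pos hlc (pow_pos hc₀pos _)) (pow_pos hccpos _), ?_⟩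
  intro N
  obtain ⟨t, htge, htpos, htgood⟩ := exists_good_n s hs1 hs2 (max N (Q.natDegree + 3))
  have htN : N ≤ t := le_trans (le_max_left _ _) htge
  have htD : Q.natDegree + 3 ≤ t := le_trans (le_max_right _ _) htge
  have htLt : t ≤ L * t := Nat.le_mul_of_pos_left t hLpos
  refine ⟨L * t, le_trans htN htLt, by omega, ?_⟩
  set n := L * t with hn
  have hnpos : 0 < n := Nat.mul_pos hLpos htpos
  have hnR : (0:ℝ) < n := by exact_mod_cast hnpos
  have hn1 : (1:ℝ) ≤ n := by exact_mod_cast hnpos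
  intro ζ hζn hζev
  have hζabs : Complex.abs ζ = 1 := abs_unit_eq_one hζn hnpos.ne'
  have hcircle : ∀ ρ ∈ rts, Complex.abs ρ = 1 → cc / n ≤ Complex.abs (ζ - ρ) := by
    intro ρ hρ hρabs
    have hρroot : Q.IsRoot ρ := by
      rw [hrts, Multiset.mem_toFinset, Polynomial.mem_roots hQ] at hρ; exact hρ
    by_cases hru : ∃ m : ℕ, 0 < m ∧ ρ ^ m = 1
    · have hρn : ρ ^ n = 1 := by rw [hn, pow_mul, hL ρ hρ hru, one_pow]
      have hρ0 : ρ ≠ 0 := by intro h; rw [h] at hρabs; simp at hρabs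
      set u : ℂ := ζ * ρ⁻¹ with hu
      have hun : u ^ n = 1 := by
        rw [hu, mul_pow, hζn, one_mul, inv_pow, hρn, inv_one]
      have hune : u ≠ 1 := by
        intro h
        apply hζev
        have hζρ : ζ = ρ := by
          rw [hu, mul_inv_eq_one₀ hρ0] at h
          exact h
        rw [hζρ]
        exact hρroot
      have hsp := root_of_unity_spacing hun hune hnpos.ne'
      have hrw : ζ - ρ = ρ * (u - 1) := by rw [hu]; field_simp
      rw [hrw, map_mul, hρabs, one_mul]
      calc cc / n ≤ 1 / n := (div_le_div_iff_of_pos_right hnR).mpr hccle1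
        _ ≤ Complex.abs (u - 1) := hsp
    · have hzs : ρ ^ L ∈ s := by
        rw [hs]
        exact Finset.mem_image_of_mem _ (Finset.mem_filter.mpr ⟨hρ, hρabs, hru⟩)
      have hbound := htgood (ρ ^ L) hzs
      have hρn1 : 1 / (4 * ((s.card : ℝ) + 1)) ≤ Complex.abs (ρ ^ n - 1) := by
        rw [hn, pow_mul]
        exact hbound
      have hcc' : cc ≤ Complex.abs (ρ ^ n - 1) := le_trans (min_le_left _ _) hρn1
      have htel : Complex.abs (ρ ^ n - ζ ^ n) ≤ n * Complex.abs (ρ - ζ) :=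
        abs_pow_sub_pow ρ ζ (le_of_eq hρabs) (le_of_eq hζabs) n
      rw [hζn] at htel
      have h2 : cc ≤ n * Complex.abs (ρ - ζ) := le_trans hcc' htel
      rw [div_le_iff₀ hnR, Complex.abs.map_sub ζ ρ]
      linarith
  have hoff : ∀ ρ ∈ rts, Complex.abs ρ ≠ 1 → c₀ ≤ Complex.abs (ζ - ρ) := by
    intro ρ hρ hρabs
    have h1 : |Complex.abs ζ - Complex.abs ρ| ≤ Complex.abs (ζ - ρ) :=
      Complex.abs.abs_abv_sub_le_abv_sub ζ ρ
    rw [hζabs] at h1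
    have h2 : δ0 ≤ |Complex.abs ρ - 1| := hδ0 ρ (Finset.mem_filter.mpr ⟨hρ, hρabs⟩)
    rw [abs_sub_comm] at h2
    exact le_trans hc₀δ0 (le_trans h2 h1)
  obtain ⟨ρs, hρsmem, hρsmin⟩ := Finset.exists_min_image rts (fun ρ => Complex.abs (ζ - ρ)) hrtsne
  have hfar : ∀ ρ ∈ rts, ρ ≠ ρs → c₀ ≤ Complex.abs (ζ - ρ) := by
    intro ρ hρ hne
    have hpair : δ1 ≤ Complex.abs (ρ - ρs) :=
      hδ1 (ρ, ρs) (Finset.mem_offDiag.mpr ⟨hρ, hρsmem, hne⟩)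
    have htri : Complex.abs (ρ - ρs) ≤ Complex.abs (ζ - ρs) + Complex.abs (ζ - ρ) := by
      calc Complex.abs (ρ - ρs) = Complex.abs ((ζ - ρs) - (ζ - ρ)) := by ring_nf
        _ ≤ _ := Complex.abs.sub_le_add _ _
    have hmin := hρsmin ρ hρ
    linarith
  -- product formula
  have hsplit : Q.Splits := IsAlgClosed.splits Q
  have hfac := hsplit.eq_prod_roots
  have heval : Complex.abs (Q.eval ζ) = Complex.abs Q.leadingCoeff *
      ∏ ρ ∈ rts, Complex.abs (ζ - ρ) ^ (Q.roots.count ρ) := by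
    conv_lhs => rw [hfac]
    rw [Polynomial.eval_mul, Polynomial.eval_C, map_mul]
    congr 1
    rw [Polynomial.eval_multiset_prod, Multiset.map_map, map_multiset_prod, Multiset.map_map]
    have hmc : Multiset.map (Complex.abs ∘ Polynomial.eval ζ ∘ fun a => X - C a) Q.roots
        = Multiset.map (fun a => Complex.abs (ζ - a)) Q.roots := by
      apply Multiset.map_congr rfl
      intro a _
      simp [Polynomial.eval_sub]
    rw [hmc, Finset.prod_multiset_map_count]
  have hcount : ∑ ρ ∈ rts, Q.roots.count ρ ≤ dd := by
    rw [hrts, Multiset.toFinset_sum_count_eq]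
    exact Polynomial.card_roots' Q
  have hccn_pos : (0:ℝ) < cc / n := div_pos hccpos hnR
  have hccn_le1 : cc / n ≤ 1 := by
    rw [div_le_one hnR]; exact hccle1.trans hn1
  have hprod : c₀ ^ (2*dd) * (cc / n) ^ μmax ≤
      ∏ ρ ∈ rts, Complex.abs (ζ - ρ) ^ (Q.roots.count ρ) := by
    rw [Finset.prod_eq_prod_diff_singleton_mul hρsmem
      (fun ρ => Complex.abs (ζ - ρ) ^ (Q.roots.count ρ))]
    have hpart1 : c₀ ^ dd ≤ ∏ ρ ∈ rts \ {ρs}, Complex.abs (ζ - ρ) ^ (Q.roots.count ρ) := by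
      have hstep1 : ∏ ρ ∈ rts \ {ρs}, c₀ ^ (Q.roots.count ρ) ≤
          ∏ ρ ∈ rts \ {ρs}, Complex.abs (ζ - ρ) ^ Q.roots.count ρ := by
        apply Finset.prod_le_prod
        · intro ρ _; positivity
        · intro ρ hρ
          have hρmem : ρ ∈ rts := (Finset.mem_sdiff.mp hρ).1
          have hρne : ρ ≠ ρs := by
            intro h
            exact (Finset.mem_sdiff.mp hρ).2 (by rw [h]; exact Finset.mem_singleton_self ρs)
          exact pow_le_pow_left₀ hc₀pos.le (hfar ρ hρmem hρne) _
      refine le_trans ?_ hstep1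
      rw [Finset.prod_pow_eq_pow_sum]
      apply pow_le_pow_of_le_one hc₀pos.le hc₀le1
      refine le_trans ?_ hcount
      exact Finset.sum_le_sum_of_subset (Finset.sdiff_subset)
    have hpart2 : c₀ ^ dd * (cc / n) ^ μmax ≤ Complex.abs (ζ - ρs) ^ (Q.roots.count ρs) := by
      have hcount_le : Q.roots.count ρs ≤ dd := by
        refine le_trans ?_ hcount
        exact Finset.single_le_sum (f := fun ρ => Q.roots.count ρ)
          (fun ρ _ => Nat.zero_le _) hρsmem
      by_cases hρscirc : Complex.abs ρs = 1
      · have hmult : Q.roots.count ρs ≤ μmax := by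
          rw [Polynomial.count_roots]
          refine hub ρs hρscirc ?_
          rw [hrts, Multiset.mem_toFinset, Polynomial.mem_roots hQ] at hρsmem
          exact hρsmem
        have hlb := hcircle ρs hρsmem hρscirc
        calc c₀ ^ dd * (cc/(n:ℝ)) ^ μmax ≤ 1 * (cc/(n:ℝ)) ^ μmax := by
              apply mul_le_mul_of_nonneg_right _ (pow_nonneg hccn_pos.le _)
              exact pow_le_one₀ hc₀pos.le hc₀le1
          _ = (cc/(n:ℝ)) ^ μmax := one_mul _
          _ ≤ (cc/(n:ℝ)) ^ (Q.roots.count ρs) := pow_le_pow_of_le_one hccn_pos.le hccn_le1 hmult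
          _ ≤ Complex.abs (ζ - ρs) ^ (Q.roots.count ρs) := pow_le_pow_left₀ hccn_pos.le hlb _
      · have hlb := hoff ρs hρsmem hρscirc
        calc c₀ ^ dd * (cc/(n:ℝ)) ^ μmax ≤ c₀ ^ dd * 1 := by
              apply mul_le_mul_of_nonneg_left _ (by positivity)
              exact pow_le_one₀ hccn_pos.le hccn_le1
          _ = c₀ ^ dd := mul_one _
          _ ≤ c₀ ^ (Q.roots.count ρs) := pow_le_pow_of_le_one hc₀pos.le hc₀le1 hcount_le
          _ ≤ _ := pow_le_pow_left₀ hc₀pos.le hlb _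
    calc c₀ ^ (2*dd) * (cc/(n:ℝ)) ^ μmax
        = (c₀ ^ dd) * (c₀ ^ dd * (cc/(n:ℝ))^μmax) := by rw [two_mul, pow_add]; ring
      _ ≤ _ := mul_le_mul hpart1 hpart2 (mul_nonneg (pow_nonneg hc₀pos.le _) (pow_nonneg hccn_pos.le _))
          (Finset.prod_nonneg fun ρ _ => by positivity)
  rw [heval]
  have hrw : Complex.abs Q.leadingCoeff * c₀ ^ (2*dd) * cc ^ μmax / (n:ℝ)^μmax =
      Complex.abs Q.leadingCoeff * (c₀^(2*dd) * (cc/(n:ℝ))^μmax) := by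
    rw [div_pow]; ring
  rw [hrw]
  exact mul_le_mul_of_nonneg_left hprod hlc.le

end Helpers

/-- **Lower shrinkage rate.**  If `Λ` is a nonzero real polynomial with
`Λ(1) ≠ 0 ≠ Λ(−1)` having a root on the unit circle, and `μmax` is the maximal
multiplicity of a root of `Λ` of absolute value one, then
`liminf (−log σ̂_n(Λ))/(log n) = μmax`. -/
theorem liminf_shrinkage_eq_max_multiplicity
    (Λ : Polynomial ℝ) (hΛ : Λ ≠ 0)
    (h1 : Λ.eval 1 ≠ 0) (hneg1 : Λ.eval (-1) ≠ 0)
    (hex : ∃ ξ : ℂ, ‖ξ‖ = 1 ∧ (Λ.map (algebraMap ℝ ℂ)).IsRoot ξ)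
    (μmax : ℕ)
    (hμmax : IsGreatest {μ : ℕ | ∃ ξ : ℂ, ‖ξ‖ = 1 ∧
      (Λ.map (algebraMap ℝ ℂ)).IsRoot ξ ∧
      (Λ.map (algebraMap ℝ ℂ)).rootMultiplicity ξ = μ} μmax) :
    Filter.liminf
      (fun n : ℕ => -Real.log (sigmaHat (Λ.map (algebraMap ℝ ℂ)) n) / Real.log n)
      Filter.atTop = (μmax : ℝ) := by
  set Q : Polynomial ℂ := Λ.map (algebraMap ℝ ℂ) with hQdef
  have hQ : Q ≠ 0 := Polynomial.map_ne_zero hΛ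
  set f : ℕ → ℝ := fun n => -Real.log (sigmaHat Q n) / Real.log n with hfdef
  set D : ℕ := Q.natDegree with hD
  obtain ⟨ξ, hξabs, hξroot, hξmult⟩ := hμmax.1
  have hub : ∀ ρ : ℂ, Complex.abs ρ = 1 → Q.IsRoot ρ → Q.rootMultiplicity ρ ≤ μmax := by
    intro ρ hρabs hρroot
    exact hμmax.2 ⟨ρ, hρabs, hρroot, rfl⟩
  -- upper bound constant
  obtain ⟨C1, hC1pos, hC1⟩ := exists_eval_upper Q ξ
  set A : ℝ := C1 * (7 * ((D:ℝ) + 2)) ^ μmax with hA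
  have hApos : 0 < A := by
    apply mul_pos hC1pos
    apply pow_pos
    positivity
  -- eventual facts
  have hupper : ∀ n : ℕ, D + 2 < n → sigmaHat Q n ≤ A / (n:ℝ) ^ μmax ∧ 0 < sigmaHat Q n := by
    intro n hn
    have hnpos : 0 < n := by omega
    have hnR : (0:ℝ) < n := by exact_mod_cast hnpos
    obtain ⟨ζ, hζn, hζev, hζdist⟩ := exists_close_nonroot Q hQ hξabs hn
    have hζabs : Complex.abs ζ = 1 := abs_unit_eq_one hζn hnpos.ne'
    constructor
    · calc sigmaHat Q n ≤ Complex.abs (Q.eval ζ) := sigmaHat_le Q n hζn hζev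
        _ ≤ C1 * Complex.abs (ζ - ξ) ^ (Q.rootMultiplicity ξ) := hC1 ζ hζabs.le
        _ ≤ C1 * ((7 * ((D:ℝ) + 2)) / n) ^ (Q.rootMultiplicity ξ) := by
            apply mul_le_mul_of_nonneg_left _ hC1pos.le
            exact pow_le_pow_left₀ (Complex.abs.nonneg _) hζdist _
        _ = A / (n:ℝ) ^ μmax := by
            rw [hξmult, hA, div_pow]
            ring
    · apply sigmaHat_pos Q hnpos
      exact ⟨Complex.abs (Q.eval ζ), ζ, hζn, hζev, rfl⟩
  -- lower bound constant
  obtain ⟨C2, hC2pos, hC2⟩ := sigma_lower Q hQ μmax hub ⟨ξ, hξabs, hξroot⟩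
  -- log helper
  have hlog1 : ∀ n : ℕ, 3 ≤ n → 1 ≤ Real.log n := by
    intro n hn
    have hnR : (3:ℝ) ≤ n := by exact_mod_cast hn
    rw [Real.le_log_iff_exp_le (by linarith)]
    calc Real.exp 1 ≤ 2.7182818286 := Real.exp_one_lt_d9.le
      _ ≤ 3 := by norm_num
      _ ≤ n := hnR
  -- eventual lower bound on f
  have hflower : ∀ n : ℕ, D + 2 < n → 2 ≤ n → (μmax : ℝ) - Real.log A / Real.log n ≤ f n := by
    intro n hn hn2
    obtain ⟨hσle, hσpos⟩ := hupper n hn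
    have hnR : (1:ℝ) < n := by exact_mod_cast hn2
    have hlogn : 0 < Real.log n := Real.log_pos hnR
    have hnpow : (0:ℝ) < (n:ℝ) ^ μmax := by positivity
    have hlog : Real.log (sigmaHat Q n) ≤ Real.log A - μmax * Real.log n := by
      have := (Real.log_le_log_iff hσpos (by positivity)).mpr hσle
      rwa [Real.log_div hApos.ne' hnpow.ne', Real.log_pow] at this
    rw [hfdef]
    simp only []
    have hrw : (μmax : ℝ) - Real.log A / Real.log n
        = ((μmax : ℝ) * Real.log n - Real.log A) / Real.log n := by
      field_simp
    rw [hrw, div_le_div_iff_of_pos_right hlogn]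
    linarith
  -- frequent upper bound on f
  have hffreq : ∀ N : ℕ, ∃ n : ℕ, N ≤ n ∧ 2 ≤ n ∧
      f n ≤ (μmax : ℝ) + (-Real.log C2) / Real.log n := by
    intro N
    obtain ⟨n, hnN, hnD, hlow⟩ := hC2 (max N 2)
    have hn2 : 2 ≤ n := le_trans (le_max_right _ _) hnN
    have hnR : (1:ℝ) < n := by exact_mod_cast hn2
    have hlogn : 0 < Real.log n := Real.log_pos hnR
    have hnpow : (0:ℝ) < (n:ℝ) ^ μmax := by positivity
    obtain ⟨hσle, hσpos⟩ := hupper n hnD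
    have hσge : C2 / (n:ℝ) ^ μmax ≤ sigmaHat Q n := by
      apply le_sigmaHat Q n
      · obtain ⟨ζ, hζn, hζev, -⟩ := exists_close_nonroot Q hQ hξabs hnD
        exact ⟨Complex.abs (Q.eval ζ), ζ, hζn, hζev, rfl⟩
      · exact hlow
    have hlog : Real.log C2 - μmax * Real.log n ≤ Real.log (sigmaHat Q n) := by
      have := (Real.log_le_log_iff (by positivity) hσpos).mpr hσge
      rwa [Real.log_div hC2pos.ne' hnpow.ne', Real.log_pow] at this
    refine ⟨n, le_trans (le_max_left _ _) hnN, hn2, ?_⟩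
    rw [hfdef]
    simp only []
    have hrw : (μmax : ℝ) + (-Real.log C2) / Real.log n
        = ((μmax : ℝ) * Real.log n - Real.log C2) / Real.log n := by
      field_simp
      ring
    rw [hrw, div_le_div_iff_of_pos_right hlogn]
    linarith
  -- frequent constant upper bound
  have hfreq2 : ∃ᶠ n in atTop, 2 ≤ n ∧ f n ≤ (μmax : ℝ) + (-Real.log C2) / Real.log n := by
    rw [Filter.frequently_atTop]
    intro N
    obtain ⟨n, hnN, hn2, hbd⟩ := hffreq N
    exact ⟨n, hnN, hn2, hbd⟩
  have hfreq3 : ∃ᶠ n in atTop, f n ≤ (μmax : ℝ) + |Real.log C2| := by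
    refine (hfreq2.and_eventually (eventually_ge_atTop 3)).mono ?_
    rintro n ⟨⟨hn2, hbd⟩, hn3⟩
    have hlogn1 : 1 ≤ Real.log n := hlog1 n hn3
    have h4 : (-Real.log C2) / Real.log n ≤ |Real.log C2| := by
      calc (-Real.log C2) / Real.log n ≤ |Real.log C2| / Real.log n := by
            apply (div_le_div_iff_of_pos_right (by linarith)).mpr
            rw [← abs_neg]
            exact le_abs_self _
        _ ≤ |Real.log C2| := div_le_self (abs_nonneg _) hlogn1
    linarith
  have hcob : IsCoboundedUnder (· ≥ ·) atTop f :=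
    Filter.IsCoboundedUnder.of_frequently_le hfreq3
  have hboundedf : IsBoundedUnder (· ≥ ·) atTop f := by
    refine ⟨(μmax : ℝ) - |Real.log A|, ?_⟩
    rw [Filter.eventually_map]
    filter_upwards [eventually_gt_atTop (D + 2), eventually_ge_atTop 3] with n hn hn3
    have hlogn1 : 1 ≤ Real.log n := hlog1 n hn3
    have hfl := hflower n hn (by omega)
    have h4 : Real.log A / Real.log n ≤ |Real.log A| := by
      calc Real.log A / Real.log n ≤ |Real.log A| / Real.log n := by
            apply (div_le_div_iff_of_pos_right (by linarith)).mpr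
            exact le_abs_self _
        _ ≤ |Real.log A| := div_le_self (abs_nonneg _) hlogn1
    linarith
  -- liminf ≥ μmax
  have hlim_ge : (μmax : ℝ) ≤ liminf f atTop := by
    apply le_of_forall_sub_le
    intro ε hε
    apply le_liminf_of_le hcob
    have htends : Tendsto (fun n : ℕ => Real.log A / Real.log n) atTop (nhds 0) :=
      tendsto_const_nhds.div_atTop (Real.tendsto_log_atTop.comp tendsto_natCast_atTop_atTop)
    have hev2 : ∀ᶠ n : ℕ in atTop, Real.log A / Real.log n ≤ ε :=
      htends.eventually (eventually_le_nhds hε)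
    filter_upwards [hev2, eventually_gt_atTop (D + 2), eventually_ge_atTop 2] with n h2 h3 h4
    have := hflower n h3 h4
    linarith
  -- liminf ≤ μmax
  have hlim_le : liminf f atTop ≤ (μmax : ℝ) := by
    apply le_of_forall_sub_le
    intro ε hε
    rw [sub_le_iff_le_add]
    have htends : Tendsto (fun n : ℕ => (-Real.log C2) / Real.log n) atTop (nhds 0) :=
      tendsto_const_nhds.div_atTop (Real.tendsto_log_atTop.comp tendsto_natCast_atTop_atTop)
    have hev3 : ∀ᶠ n : ℕ in atTop, (-Real.log C2) / Real.log n ≤ ε :=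
      htends.eventually (eventually_le_nhds hε)
    have hfreq4 : ∃ᶠ n in atTop, f n ≤ (μmax : ℝ) + ε := by
      refine (hfreq2.and_eventually hev3).mono ?_
      rintro n ⟨⟨hn2, hbd⟩, hsm⟩
      linarith
    exact liminf_le_of_frequently_le hfreq4 hboundedf
  exact le_antisymm hlim_le hlim_ge
end

section
/- For every integer n ≥ 2, the complex number ξ = (2n − 1 + i·√(4n − 1))/(2n) satisfies nξ² − (2n−1)ξ + n = 0 and |ξ| = 1, and ξ is not a root of unity (there is no positive integer k with ξ^k = 1). -/
/-- **Odd twist knot polynomial.**  For `n ≥ 2`, the number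
`ξ = (2n − 1 + i√(4n − 1)) / (2n)` is a root of `nX² − (2n−1)X + n`, lies on the
unit circle, and is not a root of unity. -/
theorem odd_twist_knot_root_not_root_of_unity
    (n : ℕ) (hn : 2 ≤ n) (ξ : ℂ)
    (hξ : ξ = (((2 * (n : ℝ) - 1 : ℝ) : ℂ) +
      ((Real.sqrt (4 * (n : ℝ) - 1) : ℝ) : ℂ) * Complex.I) / (2 * (n : ℂ))) :
    (n : ℂ) * ξ ^ 2 - (2 * (n : ℂ) - 1) * ξ + (n : ℂ) = 0 ∧
    ‖ξ‖ = 1 ∧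
    ∀ k : ℕ, 0 < k → ξ ^ k ≠ 1 := by
  have hn2 : (2:ℝ) ≤ (n:ℝ) := by exact_mod_cast hn
  have hnn : (4 * (n:ℝ) - 1) ≥ 0 := by linarith
  have hs : Real.sqrt (4 * (n:ℝ) - 1) ^ 2 = 4 * (n:ℝ) - 1 := Real.sq_sqrt hnn
  have hn0 : (n:ℂ) ≠ 0 := by
    exact_mod_cast Nat.cast_ne_zero.mpr (by omega)
  have hsC : ((Real.sqrt (4 * (n:ℝ) - 1) : ℝ) : ℂ) ^ 2 = 4 * (n:ℂ) - 1 := by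
    rw [← Complex.ofReal_pow, hs]; push_cast; ring
  have hroot : (n : ℂ) * ξ ^ 2 - (2 * (n : ℂ) - 1) * ξ + (n : ℂ) = 0 := by
    have h2 : 2 * (n:ℂ) * ξ = ((2 * (n:ℝ) - 1 : ℝ) : ℂ) +
        ((Real.sqrt (4 * (n:ℝ) - 1) : ℝ) : ℂ) * Complex.I := by
      rw [hξ]; field_simp
    have h4 : (4 * (n:ℂ)) * ((n : ℂ) * ξ ^ 2 - (2 * (n : ℂ) - 1) * ξ + (n : ℂ)) = 0 := by
      push_cast at h2
      linear_combination (2 * (n:ℂ) * ξ + (2 * (n:ℂ) - 1) +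
        ((Real.sqrt (4 * (n:ℝ) - 1) : ℝ) : ℂ) * Complex.I - 2 * (2 * (n:ℂ) - 1)) * h2 +
        ((Real.sqrt (4 * (n:ℝ) - 1) : ℝ) : ℂ) ^ 2 * Complex.I_sq - hsC
    rcases mul_eq_zero.mp h4 with h | h
    · exact absurd h (mul_ne_zero (by norm_num) hn0)
    · exact h
  have habs : ‖ξ‖ = 1 := by
    rw [hξ, norm_div, Complex.norm_add_mul_I, norm_mul]
    rw [Complex.norm_natCast]
    have : (2 * (n:ℝ) - 1) ^ 2 + Real.sqrt (4 * (n:ℝ) - 1) ^ 2 = (2*(n:ℝ))^2 := by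
      rw [hs]; ring
    rw [this, Real.sqrt_sq (by linarith)]
    simp
    omega
  refine ⟨hroot, habs, ?_⟩
  rintro k hk hξk
  have hξ0 : ξ ≠ 0 := by
    intro h; rw [h] at habs; simp at habs
  have hint : IsIntegral ℤ ξ :=
    ⟨Polynomial.X ^ k - Polynomial.C 1, Polynomial.monic_X_pow_sub_C 1 hk.ne',
      by simp [hξk]⟩
  have hinv_eq : ξ⁻¹ = ξ ^ (k - 1) := by
    apply inv_eq_of_mul_eq_one_right
    rw [← pow_succ', Nat.sub_add_cancel hk]
    exact hξk
  have hsum : IsIntegral ℤ (ξ + ξ⁻¹) := by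
    rw [hinv_eq]; exact hint.add (hint.pow _)
  have hval : ξ + ξ⁻¹ = algebraMap ℚ ℂ ((2 * (n:ℚ) - 1) / n) := by
    have hnq : (n:ℚ) ≠ 0 := Nat.cast_ne_zero.mpr (by omega)
    have : (algebraMap ℚ ℂ) ((2 * (n:ℚ) - 1) / (n:ℚ)) = (2 * (n:ℂ) - 1) / (n:ℂ) := by
      push_cast; simp
    rw [this]
    field_simp
    linear_combination hroot
  rw [hval] at hsum
  have hq : IsIntegral ℤ ((2 * (n:ℚ) - 1) / n) :=
    (isIntegral_algebraMap_iff (algebraMap ℚ ℂ).injective).mp hsum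
  obtain ⟨m, hm⟩ := IsIntegrallyClosed.isIntegral_iff.mp hq
  have hnq : (n:ℚ) ≠ 0 := Nat.cast_ne_zero.mpr (by omega)
  have hm' : (m:ℚ) * n = 2 * (n:ℚ) - 1 := by
    have : (m:ℚ) = (2 * (n:ℚ) - 1) / n := by exact_mod_cast hm
    field_simp at this
    linarith
  have hmz : (m:ℤ) * n = 2 * (n:ℤ) - 1 := by exact_mod_cast hm'
  have hdvd : (n:ℤ) ∣ 1 := ⟨2 - m, by linarith [hmz]⟩
  have := Int.le_of_dvd one_pos hdvd
  have : (2:ℤ) ≤ n := by exact_mod_cast hn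
  omega
end
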